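/- arXiv:2306.11132 — 3 statements merged into one kernel-verified Lean document; each statement's English description precedes it below -/
import Mathlib

section
/- Let V be a finite set of N nodes partitioned into two sensitive groups S₀ and S₁ of sizes N₀ ≥ 1 and N₁ ≥ 1, with features X : V → ℝ^d and the fairness-aware message passing F⁽⁰⁾ = X, F⁽¹⁾, F⁽²⁾. Let μ⁽⁰⁾ and μ⁽¹⁾ be the group means of X and let Δ ∈ ℝ^d be the componentwise maximal deviation of X from its overall mean. Then the representation discrepancy Δ_DP^Rep(F⁽²⁾) = ‖(1/N₀)·Σ_{i∈S₀} F⁽²⁾_i − (1/N₁)·Σ_{j∈S₁} F⁽²⁾_j‖ satisfies Δ_DP^Rep(F⁽²⁾) ≤ (3 − (1/(N₀N₁²) + 1/(N₀²N₁))·Σ_{i∈S₀} Σ_{j∈S₁} k(F⁽¹⁾_i, F⁽¹⁾_j))·C₃ + C₂, where C₂ = ‖μ⁽⁰⁾ − μ⁽¹⁾‖ + 8·(1 + 1/N₀ + 1/N₁)²·‖Δ‖ + 2·‖Δ‖ and C₃ = (3 − 1/N₀ − 1/N₁)·‖μ⁽⁰⁾ − μ⁽¹⁾‖ + (4 + 2/N₀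 + 2/N₁)·‖Δ‖. -/
open Matrix Finset

/-- RBF kernel `k(x,y) = exp(-α‖x-y‖²)`. -/
noncomputable def ker {d : ℕ} (α : ℝ) (x y : EuclideanSpace ℝ (Fin d)) : ℝ :=
  Real.exp (-α * ‖x - y‖ ^ 2)

/-- The sensitive group `S_b`, where group membership is given by `grp`
(`false` encodes `S₀` and `true` encodes `S₁`). -/
def sgrp {V : Type*} [Fintype V] (grp : V → Bool) (b : Bool) : Finset V :=
  Finset.univ.filter (fun i => grp i = b)

/-- Fairness-aware message passing: `F 0 = X`, and each layer `k ≥ 1` updates node `i`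
(lying in group `grp i`, with opposite group `!grp i`) by
`F⁽ᵏ⁾_i = X_i + (1/|N(i)|)·Σ_{u∈N(i)} F⁽ᵏ⁻¹⁾_u
       − (1/N_t²)·Σ_{u∈S_t} k(F⁽ᵏ⁻¹⁾_u,F⁽ᵏ⁻¹⁾_i)·F⁽ᵏ⁻¹⁾_u
       + (1/(N₀N₁))·Σ_{u∈S_{1−t}} k(F⁽ᵏ⁻¹⁾_u,F⁽ᵏ⁻¹⁾_i)·F⁽ᵏ⁻¹⁾_u
       + ((1/N_t²)·Σ_{u∈S_t} k(...) − (1/(N₀N₁))·Σ_{u∈S_{1−t}} k(...))·F⁽ᵏ⁻¹⁾_i`. -/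
def FairMP {V : Type*} [Fintype V] {d : ℕ} (α : ℝ) (grp : V → Bool)
    (Nb : V → Finset V) (X : V → EuclideanSpace ℝ (Fin d))
    (F : ℕ → V → EuclideanSpace ℝ (Fin d)) : Prop :=
  F 0 = X ∧
  ∀ k : ℕ, 1 ≤ k → ∀ i : V,
    F k i = X i + (((Nb i).card : ℝ)⁻¹) • ∑ u ∈ Nb i, F (k-1) u
      - (1 / ((sgrp grp (grp i)).card : ℝ) ^ 2) •
          ∑ u ∈ sgrp grp (grp i), ker α (F (k-1) u) (F (k-1) i) • F (k-1) u
      + (1 / (((sgrp grp false).card : ℝ) * ((sgrp grp true).card : ℝ))) •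
          ∑ u ∈ sgrp grp (!grp i), ker α (F (k-1) u) (F (k-1) i) • F (k-1) u
      + ((1 / ((sgrp grp (grp i)).card : ℝ) ^ 2) *
            ∑ u ∈ sgrp grp (grp i), ker α (F (k-1) u) (F (k-1) i)
         - (1 / (((sgrp grp false).card : ℝ) * ((sgrp grp true).card : ℝ))) *
            ∑ u ∈ sgrp grp (!grp i), ker α (F (k-1) u) (F (k-1) i)) • F (k-1) i

/-- Componentwise maximal deviation of the rows of `F` from the overall mean row:
`(dev F)_m = max_{i∈V} |F_{i,m} − (1/N)·Σ_{j∈V} F_{j,m}|`. -/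
noncomputable def dev {V : Type*} [Fintype V] {d : ℕ}
    (F : V → EuclideanSpace ℝ (Fin d)) : EuclideanSpace ℝ (Fin d) :=
  WithLp.toLp 2 (fun m => ⨆ i : V, |F i m - (1 / (Fintype.card V : ℝ)) * ∑ j : V, F j m|)

private lemma esum_apply {V : Type*} {d : ℕ} (f : V → EuclideanSpace ℝ (Fin d))
    (s : Finset V) (m : Fin d) : (∑ u ∈ s, f u) m = ∑ u ∈ s, f u m :=
  by rw [WithLp.ofLp_sum, Finset.sum_apply]

private lemma enorm_le {d : ℕ} (v w : EuclideanSpace ℝ (Fin d)) (h : ∀ m, |v m| ≤ w m) :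
    ‖v‖ ≤ ‖w‖ := by
  rw [EuclideanSpace.norm_eq, EuclideanSpace.norm_eq]
  apply Real.sqrt_le_sqrt
  apply Finset.sum_le_sum
  intro m _
  have h2 : ‖v m‖ ≤ ‖w m‖ := by
    rw [Real.norm_eq_abs, Real.norm_eq_abs]
    exact le_trans (h m) (le_abs_self _)
  exact pow_le_pow_left₀ (norm_nonneg _) h2 2

set_option maxHeartbeats 2000000 in
/-- Theorem 4.2 (`K = 2`): the representation discrepancy of `F⁽²⁾` between the two
sensitive groups satisfies
`Δ_DP^Rep(F⁽²⁾) ≤ (3 − (1/(N₀N₁²) + 1/(N₀²N₁))·Σ_{i∈S₀}Σ_{j∈S₁} k(F⁽¹⁾_i, F⁽¹⁾_j))·C₃ + C₂`,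
where `C₂ = ‖μ⁽⁰⁾ − μ⁽¹⁾‖ + 8·(1 + 1/N₀ + 1/N₁)²·‖Δ‖ + 2·‖Δ‖` and
`C₃ = (3 − 1/N₀ − 1/N₁)·‖μ⁽⁰⁾ − μ⁽¹⁾‖ + (4 + 2/N₀ + 2/N₁)·‖Δ‖`. -/
theorem stmt1 {V : Type*} [Fintype V] {d : ℕ} {α : ℝ} (hα : 0 < α)
    (grp : V → Bool) (N₀ N₁ : ℕ)
    (hcard0 : (sgrp grp false).card = N₀) (hcard1 : (sgrp grp true).card = N₁)
    (hN₀ : 1 ≤ N₀) (hN₁ : 1 ≤ N₁)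
    (Nb : V → Finset V) (hNb : ∀ i, (Nb i).Nonempty)
    (X : V → EuclideanSpace ℝ (Fin d)) (F : ℕ → V → EuclideanSpace ℝ (Fin d))
    (hF : FairMP α grp Nb X F)
    (μ : Bool → EuclideanSpace ℝ (Fin d))
    (hμ : ∀ b, μ b = (((sgrp grp b).card : ℝ))⁻¹ • ∑ i ∈ sgrp grp b, X i) :
    ‖(1 / (N₀ : ℝ)) • ∑ i ∈ sgrp grp false, F 2 i
        - (1 / (N₁ : ℝ)) • ∑ j ∈ sgrp grp true, F 2 j‖ ≤
      (3 - (1 / ((N₀ : ℝ) * (N₁ : ℝ) ^ 2) + 1 / ((N₀ : ℝ) ^ 2 * (N₁ : ℝ))) *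
          ∑ i ∈ sgrp grp false, ∑ j ∈ sgrp grp true, ker α (F 1 i) (F 1 j)) *
        ((3 - 1 / (N₀ : ℝ) - 1 / (N₁ : ℝ)) * ‖μ false - μ true‖
          + (4 + 2 / (N₀ : ℝ) + 2 / (N₁ : ℝ)) * ‖dev X‖)
      + (‖μ false - μ true‖ + 8 * (1 + 1 / (N₀ : ℝ) + 1 / (N₁ : ℝ)) ^ 2 * ‖dev X‖
          + 2 * ‖dev X‖) := by
  obtain ⟨hF0, hFk⟩ := hF
  set n : Bool → ℝ := fun bb => ((sgrp grp bb).card : ℝ) with hn_def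
  have hn0 : n false = (N₀ : ℝ) := by simp [hn_def, hcard0]
  have hn1 : n true = (N₁ : ℝ) := by simp [hn_def, hcard1]
  have hn_ge : ∀ bb, 1 ≤ n bb := by
    intro bb; cases bb
    · rw [hn0]; exact_mod_cast hN₀
    · rw [hn1]; exact_mod_cast hN₁
  have hn_pos : ∀ bb, 0 < n bb := fun bb => lt_of_lt_of_le one_pos (hn_ge bb)
  have hn_ne : ∀ bb, n bb ≠ 0 := fun bb => (hn_pos bb).ne'
  -- nonempty V
  have hVne : Nonempty V := by
    have h1 : 0 < (sgrp grp false).card := by omega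
    obtain ⟨i, _⟩ := Finset.card_pos.mp h1
    exact ⟨i⟩
  obtain ⟨i₀⟩ := hVne
  -- overall mean, componentwise
  set Xb : Fin d → ℝ := fun m => (1 / (Fintype.card V : ℝ)) * ∑ j : V, X j m with hXb_def
  have hdev : ∀ (i : V) (m : Fin d), |X i m - Xb m| ≤ dev X m := by
    intro i m
    exact le_ciSup (f := fun i : V => |X i m - (1 / (Fintype.card V : ℝ)) * ∑ j : V, X j m|)
      (Set.Finite.bddAbove (Set.finite_range _)) i
  have hdev0 : ∀ m, 0 ≤ dev X m := fun m => le_trans (abs_nonneg _) (hdev i₀ m)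
  -- kernel bounds
  have hker_pos : ∀ x y : EuclideanSpace ℝ (Fin d), 0 < ker α x y := fun x y => Real.exp_pos _
  have hker_le : ∀ x y : EuclideanSpace ℝ (Fin d), ker α x y ≤ 1 := by
    intro x y
    apply Real.exp_le_one_iff.mpr
    have : 0 ≤ α * ‖x - y‖ ^ 2 := by positivity
    linarith
  -- group membership
  have hmem : ∀ (bb : Bool) (u : V), u ∈ sgrp grp bb → grp u = bb := by
    intro bb u hu
    exact (Finset.mem_filter.mp hu).2
  -- KEY one-step componentwise bound
  have key : ∀ J : ℕ, ∀ (c : Fin d → ℝ) (B : Bool → ℝ), (∀ bb, 0 ≤ B bb) →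
      (∀ (u : V) (m : Fin d), |F J u m - c m| ≤ B (grp u) * dev X m) →
      ∀ (i : V) (m : Fin d), |F (J+1) i m - (Xb m + c m)| ≤
        (1 + max (B false) (B true) + (3 * B (grp i) + B (!grp i)) / n (grp i)) * dev X m := by
    intro J c B hB hG i m
    have heqv := hFk (J+1) (by omega) i
    simp only [Nat.add_sub_cancel] at heqv
    have hcardNb : (0:ℝ) < ((Nb i).card : ℝ) := by exact_mod_cast (hNb i).card_pos
    have heq : F (J+1) i m = X i m + ((Nb i).card : ℝ)⁻¹ * ∑ u ∈ Nb i, F J u m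
        - (1 / (n (grp i)) ^ 2) *
            ∑ u ∈ sgrp grp (grp i), ker α (F J u) (F J i) * F J u m
        + (1 / (n false * n true)) *
            ∑ u ∈ sgrp grp (!grp i), ker α (F J u) (F J i) * F J u m
        + ((1 / (n (grp i)) ^ 2) * ∑ u ∈ sgrp grp (grp i), ker α (F J u) (F J i)
           - (1 / (n false * n true)) * ∑ u ∈ sgrp grp (!grp i), ker α (F J u) (F J i))
          * F J i m := by
      rw [heqv]
      simp only [PiLp.add_apply, PiLp.sub_apply, PiLp.smul_apply, smul_eq_mul, esum_apply,
        Finset.mul_sum, hn_def]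
    have hcardsN : ∀ bb : Bool, ((sgrp grp bb).card : ℝ) = n bb := fun bb => rfl
    have hsplit : F (J+1) i m - (Xb m + c m) =
        (X i m - Xb m)
        + ((Nb i).card : ℝ)⁻¹ * ∑ u ∈ Nb i, (F J u m - c m)
        + (1 / (n (grp i)) ^ 2) *
            ∑ u ∈ sgrp grp (grp i), ker α (F J u) (F J i) * (F J i m - F J u m)
        + (1 / (n false * n true)) *
            ∑ u ∈ sgrp grp (!grp i), ker α (F J u) (F J i) * (F J u m - F J i m) := by
      have hinv : ((Nb i).card : ℝ)⁻¹ * ((Nb i).card : ℝ) = 1 :=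
        inv_mul_cancel₀ hcardNb.ne'
      rw [heq]
      simp only [mul_sub, Finset.sum_sub_distrib, Finset.sum_const, nsmul_eq_mul,
        ← Finset.sum_mul]
      ring_nf
      linear_combination (c m) * hinv
    rw [hsplit]
    set Dm := dev X m with hDm_def
    set Bm := max (B false) (B true) with hBm_def
    have hBmn : 0 ≤ Bm := le_trans (hB false) (le_max_left _ _)
    have hBm : ∀ u : V, B (grp u) ≤ Bm := by
      intro u; cases h : grp u
      · exact le_max_left _ _
      · exact le_max_right _ _
    have h1 : |X i m - Xb m| ≤ Dm := hdev i m
    -- neighbor average term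
    have h2 : |((Nb i).card : ℝ)⁻¹ * ∑ u ∈ Nb i, (F J u m - c m)| ≤ Bm * Dm := by
      rw [abs_mul, abs_inv, Nat.abs_cast]
      have habs : |∑ u ∈ Nb i, (F J u m - c m)| ≤ ((Nb i).card : ℝ) * (Bm * Dm) := by
        refine le_trans (Finset.abs_sum_le_sum_abs _ _) ?_
        calc ∑ u ∈ Nb i, |F J u m - c m| ≤ ∑ _u ∈ Nb i, (Bm * Dm) := by
              refine Finset.sum_le_sum ?_
              intro u _
              exact le_trans (hG u m)
                (mul_le_mul_of_nonneg_right (hBm u) (hdev0 m))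
          _ = ((Nb i).card : ℝ) * (Bm * Dm) := by
              rw [Finset.sum_const, nsmul_eq_mul]
      calc (((Nb i).card : ℝ))⁻¹ * |∑ u ∈ Nb i, (F J u m - c m)|
          ≤ (((Nb i).card : ℝ))⁻¹ * (((Nb i).card : ℝ) * (Bm * Dm)) :=
            mul_le_mul_of_nonneg_left habs (inv_nonneg.mpr hcardNb.le)
        _ = Bm * Dm := inv_mul_cancel_left₀ hcardNb.ne' _
    -- own-group kernel term
    have h3 : |(1 / (n (grp i)) ^ 2) *
        ∑ u ∈ sgrp grp (grp i), ker α (F J u) (F J i) * (F J i m - F J u m)| ≤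
        (2 * B (grp i) / n (grp i)) * Dm := by
      rw [abs_mul]
      have hco : |1 / (n (grp i)) ^ 2| = 1 / (n (grp i)) ^ 2 :=
        abs_of_pos (one_div_pos.mpr (pow_pos (hn_pos _) 2))
      rw [hco]
      have habs : |∑ u ∈ sgrp grp (grp i), ker α (F J u) (F J i) * (F J i m - F J u m)| ≤
          n (grp i) * (2 * B (grp i) * Dm) := by
        refine le_trans (Finset.abs_sum_le_sum_abs _ _) ?_
        calc ∑ u ∈ sgrp grp (grp i), |ker α (F J u) (F J i) * (F J i m - F J u m)|
            ≤ ∑ _u ∈ sgrp grp (grp i), (2 * B (grp i) * Dm) := by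
              refine Finset.sum_le_sum ?_
              intro u hu
              rw [abs_mul]
              have hk1 : |ker α (F J u) (F J i)| ≤ 1 := by
                rw [abs_of_pos (hker_pos _ _)]; exact hker_le _ _
              have hd : |F J i m - F J u m| ≤ 2 * B (grp i) * Dm := by
                have hgu : grp u = grp i := hmem _ u hu
                have e1 := hG i m
                have e2 := hG u m
                rw [hgu] at e2
                calc |F J i m - F J u m| = |(F J i m - c m) - (F J u m - c m)| := by ring_nf
                  _ ≤ |F J i m - c m| + |F J u m - c m| := abs_sub _ _
                  _ ≤ 2 * B (grp i) * Dm := by linarith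
              calc |ker α (F J u) (F J i)| * |F J i m - F J u m|
                  ≤ 1 * (2 * B (grp i) * Dm) := by
                    apply mul_le_mul hk1 hd (abs_nonneg _) zero_le_one
                _ = 2 * B (grp i) * Dm := one_mul _
          _ = n (grp i) * (2 * B (grp i) * Dm) := by
              rw [Finset.sum_const, nsmul_eq_mul, hcardsN]
      calc (1 / (n (grp i)) ^ 2) *
            |∑ u ∈ sgrp grp (grp i), ker α (F J u) (F J i) * (F J i m - F J u m)|
          ≤ (1 / (n (grp i)) ^ 2) * (n (grp i) * (2 * B (grp i) * Dm)) := by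
            apply mul_le_mul_of_nonneg_left habs; exact (one_div_pos.mpr (pow_pos (hn_pos _) 2)).le
        _ = (2 * B (grp i) / n (grp i)) * Dm := by
            field_simp [hn_ne (grp i)]
    -- cross-group kernel term
    have h4 : |(1 / (n false * n true)) *
        ∑ u ∈ sgrp grp (!grp i), ker α (F J u) (F J i) * (F J u m - F J i m)| ≤
        ((B (grp i) + B (!grp i)) / n (grp i)) * Dm := by
      rw [abs_mul]
      have hco : |1 / (n false * n true)| = 1 / (n false * n true) := by
        rw [abs_of_pos]
        have := hn_pos false; have := hn_pos true; exact one_div_pos.mpr (mul_pos (hn_pos false) (hn_pos true))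
      rw [hco]
      have habs : |∑ u ∈ sgrp grp (!grp i), ker α (F J u) (F J i) * (F J u m - F J i m)| ≤
          n (!grp i) * ((B (grp i) + B (!grp i)) * Dm) := by
        refine le_trans (Finset.abs_sum_le_sum_abs _ _) ?_
        calc ∑ u ∈ sgrp grp (!grp i), |ker α (F J u) (F J i) * (F J u m - F J i m)|
            ≤ ∑ _u ∈ sgrp grp (!grp i), ((B (grp i) + B (!grp i)) * Dm) := by
              refine Finset.sum_le_sum ?_
              intro u hu
              rw [abs_mul]
              have hk1 : |ker α (F J u) (F J i)| ≤ 1 := by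
                rw [abs_of_pos (hker_pos _ _)]; exact hker_le _ _
              have hd : |F J u m - F J i m| ≤ (B (grp i) + B (!grp i)) * Dm := by
                have hgu : grp u = !grp i := hmem _ u hu
                have e1 := hG i m
                have e2 := hG u m
                rw [hgu] at e2
                calc |F J u m - F J i m| = |(F J u m - c m) - (F J i m - c m)| := by ring_nf
                  _ ≤ |F J u m - c m| + |F J i m - c m| := abs_sub _ _
                  _ ≤ (B (grp i) + B (!grp i)) * Dm := by linarith
              calc |ker α (F J u) (F J i)| * |F J u m - F J i m|
                  ≤ 1 * ((B (grp i) + B (!grp i)) * Dm) := by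
                    apply mul_le_mul hk1 hd (abs_nonneg _) zero_le_one
                _ = (B (grp i) + B (!grp i)) * Dm := one_mul _
          _ = n (!grp i) * ((B (grp i) + B (!grp i)) * Dm) := by
              rw [Finset.sum_const, nsmul_eq_mul, hcardsN]
      have hnn : n false * n true = n (grp i) * n (!grp i) := by
        cases h : grp i <;> simp [mul_comm]
      calc (1 / (n false * n true)) *
            |∑ u ∈ sgrp grp (!grp i), ker α (F J u) (F J i) * (F J u m - F J i m)|
          ≤ (1 / (n false * n true)) * (n (!grp i) * ((B (grp i) + B (!grp i)) * Dm)) := by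
            apply mul_le_mul_of_nonneg_left habs
            have := hn_pos false; have := hn_pos true; exact (one_div_pos.mpr (mul_pos (hn_pos false) (hn_pos true))).le
        _ = ((B (grp i) + B (!grp i)) / n (grp i)) * Dm := by
            rw [hnn]
            field_simp [hn_ne (grp i), hn_ne (!grp i)]
    set T1 := X i m - Xb m with hT1
    set T2 := ((Nb i).card : ℝ)⁻¹ * ∑ u ∈ Nb i, (F J u m - c m) with hT2
    set T3 := (1 / (n (grp i)) ^ 2) *
        ∑ u ∈ sgrp grp (grp i), ker α (F J u) (F J i) * (F J i m - F J u m) with hT3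
    set T4 := (1 / (n false * n true)) *
        ∑ u ∈ sgrp grp (!grp i), ker α (F J u) (F J i) * (F J u m - F J i m) with hT4
    have e1 := abs_add_le (T1 + T2 + T3) T4
    have e2 := abs_add_le (T1 + T2) T3
    have e3 := abs_add_le T1 T2
    have hEq : Dm + Bm * Dm + (2 * B (grp i) / n (grp i)) * Dm
        + ((B (grp i) + B (!grp i)) / n (grp i)) * Dm
        = (1 + Bm + (3 * B (grp i) + B (!grp i)) / n (grp i)) * Dm := by
      field_simp [hn_ne (grp i)]
      ring
    linarith [h1, h2, h3, h4]
  -- step 1: bound F 1 around 2*Xb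
  have hstep1 : ∀ (u : V) (m : Fin d),
      |F 1 u m - (Xb m + Xb m)| ≤ (2 + 4 / n (grp u)) * dev X m := by
    intro u m
    have hg : ∀ (u' : V) (m' : Fin d),
        |F 0 u' m' - Xb m'| ≤ (fun _ : Bool => (1:ℝ)) (grp u') * dev X m' := by
      intro u' m'
      rw [hF0, one_mul]
      exact hdev u' m'
    have h := key 0 Xb (fun _ => 1) (fun _ => zero_le_one) hg u m
    have hc : (1 + max (1:ℝ) 1 + (3 * 1 + 1) / n (grp u)) = 2 + 4 / n (grp u) := by
      rw [max_self]; ring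
    rw [hc] at h
    exact h
  set B1 : Bool → ℝ := fun bb => 2 + 4 / n bb with hB1_def
  have hB1nn : ∀ bb, 0 ≤ B1 bb := by
    intro bb
    have := hn_pos bb
    simp only [hB1_def]
    positivity
  -- step 2: bound F 2 around 3*Xb
  have hstep2 : ∀ (i : V) (m : Fin d), |F 2 i m - (Xb m + (Xb m + Xb m))| ≤
      (1 + max (B1 false) (B1 true) + (3 * B1 (grp i) + B1 (!grp i)) / n (grp i)) * dev X m := by
    intro i m
    exact key 1 (fun m' => Xb m' + Xb m') B1 hB1nn (fun u m' => hstep1 u m') i m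
  set Cb : Bool → ℝ := fun bb =>
    1 + max (B1 false) (B1 true) + (3 * B1 bb + B1 (!bb)) / n bb with hCb_def
  -- group mean bound
  have hmean : ∀ (bb : Bool) (m : Fin d),
      |(n bb)⁻¹ * ∑ i ∈ sgrp grp bb, F 2 i m - (Xb m + (Xb m + Xb m))| ≤ Cb bb * dev X m := by
    intro bb m
    have hiden : (n bb)⁻¹ * ∑ i ∈ sgrp grp bb, F 2 i m - (Xb m + (Xb m + Xb m)) =
        (n bb)⁻¹ * ∑ i ∈ sgrp grp bb, (F 2 i m - (Xb m + (Xb m + Xb m))) := by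
      rw [Finset.sum_sub_distrib, Finset.sum_const, nsmul_eq_mul]
      have : ((sgrp grp bb).card : ℝ) = n bb := rfl
      rw [this, mul_sub, inv_mul_cancel_left₀ (hn_ne bb)]
    rw [hiden, abs_mul, abs_inv, abs_of_pos (hn_pos bb)]
    have habs : |∑ i ∈ sgrp grp bb, (F 2 i m - (Xb m + (Xb m + Xb m)))| ≤
        n bb * (Cb bb * dev X m) := by
      refine le_trans (Finset.abs_sum_le_sum_abs _ _) ?_
      calc ∑ i ∈ sgrp grp bb, |F 2 i m - (Xb m + (Xb m + Xb m))|
          ≤ ∑ _i ∈ sgrp grp bb, (Cb bb * dev X m) := by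
            refine Finset.sum_le_sum ?_
            intro i hi
            have h := hstep2 i m
            rw [hmem bb i hi] at h
            exact h
        _ = n bb * (Cb bb * dev X m) := by
            rw [Finset.sum_const, nsmul_eq_mul]
    calc (n bb)⁻¹ * |∑ i ∈ sgrp grp bb, (F 2 i m - (Xb m + (Xb m + Xb m)))|
        ≤ (n bb)⁻¹ * (n bb * (Cb bb * dev X m)) :=
          mul_le_mul_of_nonneg_left habs (inv_nonneg.mpr (hn_pos bb).le)
      _ = Cb bb * dev X m := by
          rw [inv_mul_cancel_left₀ (hn_ne bb)]
  -- componentwise bound on the difference of group means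
  have hfinal : ∀ m : Fin d,
      |((1 / (N₀ : ℝ)) • ∑ i ∈ sgrp grp false, F 2 i
        - (1 / (N₁ : ℝ)) • ∑ j ∈ sgrp grp true, F 2 j) m| ≤
      (Cb false + Cb true) * dev X m := by
    intro m
    have happ : ((1 / (N₀ : ℝ)) • ∑ i ∈ sgrp grp false, F 2 i
        - (1 / (N₁ : ℝ)) • ∑ j ∈ sgrp grp true, F 2 j) m =
        (n false)⁻¹ * ∑ i ∈ sgrp grp false, F 2 i m
          - (n true)⁻¹ * ∑ j ∈ sgrp grp true, F 2 j m := by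
      simp only [PiLp.sub_apply, PiLp.smul_apply, smul_eq_mul, esum_apply, hn0, hn1, one_div]
    rw [happ]
    have e1 := hmean false m
    have e2 := hmean true m
    have hsplit2 : (n false)⁻¹ * ∑ i ∈ sgrp grp false, F 2 i m
          - (n true)⁻¹ * ∑ j ∈ sgrp grp true, F 2 j m =
        ((n false)⁻¹ * ∑ i ∈ sgrp grp false, F 2 i m - (Xb m + (Xb m + Xb m)))
        - ((n true)⁻¹ * ∑ j ∈ sgrp grp true, F 2 j m - (Xb m + (Xb m + Xb m))) := by ring
    rw [hsplit2]
    calc |_ - _| ≤ |(n false)⁻¹ * ∑ i ∈ sgrp grp false, F 2 i m - (Xb m + (Xb m + Xb m))|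
          + |(n true)⁻¹ * ∑ j ∈ sgrp grp true, F 2 j m - (Xb m + (Xb m + Xb m))| :=
          abs_sub _ _
      _ ≤ Cb false * dev X m + Cb true * dev X m := add_le_add e1 e2
      _ = (Cb false + Cb true) * dev X m := by ring
  -- pass to norms
  have hCbnn : ∀ bb, 0 ≤ Cb bb := by
    intro bb
    have h1 : (0:ℝ) ≤ max (B1 false) (B1 true) := le_trans (hB1nn false) (le_max_left _ _)
    have h2 : (0:ℝ) ≤ (3 * B1 bb + B1 (!bb)) / n bb :=
      div_nonneg (by have := hB1nn bb; have := hB1nn (!bb); linarith) (hn_pos bb).le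
    simp only [hCb_def]
    linarith
  have hKnn : 0 ≤ Cb false + Cb true := add_nonneg (hCbnn false) (hCbnn true)
  have hnorm : ‖(1 / (N₀ : ℝ)) • ∑ i ∈ sgrp grp false, F 2 i
        - (1 / (N₁ : ℝ)) • ∑ j ∈ sgrp grp true, F 2 j‖ ≤
      (Cb false + Cb true) * ‖dev X‖ := by
    have h := enorm_le ((1 / (N₀ : ℝ)) • ∑ i ∈ sgrp grp false, F 2 i
          - (1 / (N₁ : ℝ)) • ∑ j ∈ sgrp grp true, F 2 j) ((Cb false + Cb true) • dev X) (fun m => by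
      rw [PiLp.smul_apply, smul_eq_mul]
      exact hfinal m)
    rwa [norm_smul, Real.norm_eq_abs, abs_of_nonneg hKnn] at h
  refine le_trans hnorm ?_
  -- numeric endgame
  set A := 1 / (N₀ : ℝ) with hA_def
  set Bv := 1 / (N₁ : ℝ) with hBv_def
  have hN₀R : (1:ℝ) ≤ (N₀ : ℝ) := by exact_mod_cast hN₀
  have hN₁R : (1:ℝ) ≤ (N₁ : ℝ) := by exact_mod_cast hN₁
  have hN₀pos : (0:ℝ) < (N₀ : ℝ) := by linarith
  have hN₁pos : (0:ℝ) < (N₁ : ℝ) := by linarith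
  have hApos : 0 < A := by rw [hA_def]; positivity
  have hBvpos : 0 < Bv := by rw [hBv_def]; positivity
  have hA1 : A ≤ 1 := by rw [hA_def]; rw [div_le_one hN₀pos]; linarith
  have hBv1 : Bv ≤ 1 := by rw [hBv_def]; rw [div_le_one hN₁pos]; linarith
  -- explicit values for B1 and Cb
  have hB1f : B1 false = 2 + 4 * A := by
    simp only [hB1_def, hn0, hA_def]; ring
  have hB1t : B1 true = 2 + 4 * Bv := by
    simp only [hB1_def, hn1, hBv_def]; ring
  have hmaxle : max (B1 false) (B1 true) ≤ 6 := by
    rw [hB1f, hB1t]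
    apply max_le <;> linarith
  have hCbF : Cb false ≤ 7 + (8 + 12 * A + 4 * Bv) * A := by
    have hdiv : (3 * B1 false + B1 true) / n false = (8 + 12 * A + 4 * Bv) * A := by
      rw [hB1f, hB1t, hn0, hA_def]
      field_simp
      ring
    simp only [hCb_def, Bool.not_false]
    rw [hdiv]
    linarith [hmaxle]
  have hCbT : Cb true ≤ 7 + (8 + 12 * Bv + 4 * A) * Bv := by
    have hdiv : (3 * B1 true + B1 false) / n true = (8 + 12 * Bv + 4 * A) * Bv := by
      rw [hB1f, hB1t, hn1, hBv_def]
      field_simp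
      ring
    simp only [hCb_def, Bool.not_true]
    rw [hdiv]
    linarith [hmaxle]
  have hDnn : (0:ℝ) ≤ ‖dev X‖ := norm_nonneg _
  have hMnn : (0:ℝ) ≤ ‖μ false - μ true‖ := norm_nonneg _
  -- kernel sum bounds
  have hkslb : (0:ℝ) ≤ ∑ i ∈ sgrp grp false, ∑ j ∈ sgrp grp true, ker α (F 1 i) (F 1 j) :=
    Finset.sum_nonneg fun i _ => Finset.sum_nonneg fun j _ => (hker_pos _ _).le
  have hksub : ∑ i ∈ sgrp grp false, ∑ j ∈ sgrp grp true, ker α (F 1 i) (F 1 j) ≤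
      (N₀ : ℝ) * (N₁ : ℝ) := by
    calc ∑ i ∈ sgrp grp false, ∑ j ∈ sgrp grp true, ker α (F 1 i) (F 1 j)
        ≤ ∑ _i ∈ sgrp grp false, ∑ _j ∈ sgrp grp true, (1:ℝ) := by
          refine Finset.sum_le_sum fun i _ => Finset.sum_le_sum fun j _ => hker_le _ _
      _ = (N₀ : ℝ) * (N₁ : ℝ) := by
          simp [hcard0, hcard1]
  have hcoefnn : (0:ℝ) ≤ 1 / ((N₀ : ℝ) * (N₁ : ℝ) ^ 2) + 1 / ((N₀ : ℝ) ^ 2 * (N₁ : ℝ)) := by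
    positivity
  have hf : 3 - (A + Bv) ≤
      3 - (1 / ((N₀ : ℝ) * (N₁ : ℝ) ^ 2) + 1 / ((N₀ : ℝ) ^ 2 * (N₁ : ℝ))) *
        ∑ i ∈ sgrp grp false, ∑ j ∈ sgrp grp true, ker α (F 1 i) (F 1 j) := by
    have h1 : (1 / ((N₀ : ℝ) * (N₁ : ℝ) ^ 2) + 1 / ((N₀ : ℝ) ^ 2 * (N₁ : ℝ))) *
        (∑ i ∈ sgrp grp false, ∑ j ∈ sgrp grp true, ker α (F 1 i) (F 1 j)) ≤
        (1 / ((N₀ : ℝ) * (N₁ : ℝ) ^ 2) + 1 / ((N₀ : ℝ) ^ 2 * (N₁ : ℝ))) *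
        ((N₀ : ℝ) * (N₁ : ℝ)) := mul_le_mul_of_nonneg_left hksub hcoefnn
    have h2 : (1 / ((N₀ : ℝ) * (N₁ : ℝ) ^ 2) + 1 / ((N₀ : ℝ) ^ 2 * (N₁ : ℝ))) *
        ((N₀ : ℝ) * (N₁ : ℝ)) = A + Bv := by
      rw [hA_def, hBv_def]
      field_simp
      ring
    linarith
  have hC3nn : (0:ℝ) ≤ (3 - A - Bv) * ‖μ false - μ true‖
      + (4 + 2 / (N₀ : ℝ) + 2 / (N₁ : ℝ)) * ‖dev X‖ := by
    have h1 : (0:ℝ) ≤ 3 - A - Bv := by linarith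
    have h2 : (0:ℝ) ≤ (4 + 2 / (N₀ : ℝ) + 2 / (N₁ : ℝ)) := by positivity
    exact add_nonneg (mul_nonneg h1 hMnn) (mul_nonneg h2 hDnn)
  have hf' : 3 - (A + Bv) = 3 - A - Bv := by ring
  rw [hf'] at hf
  have hrhs1 : (3 - A - Bv) *
      ((3 - A - Bv) * ‖μ false - μ true‖
        + (4 + 2 / (N₀ : ℝ) + 2 / (N₁ : ℝ)) * ‖dev X‖) ≤
      (3 - (1 / ((N₀ : ℝ) * (N₁ : ℝ) ^ 2) + 1 / ((N₀ : ℝ) ^ 2 * (N₁ : ℝ))) *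
          ∑ i ∈ sgrp grp false, ∑ j ∈ sgrp grp true, ker α (F 1 i) (F 1 j)) *
      ((3 - A - Bv) * ‖μ false - μ true‖
        + (4 + 2 / (N₀ : ℝ) + 2 / (N₁ : ℝ)) * ‖dev X‖) :=
    mul_le_mul_of_nonneg_right hf hC3nn
  have hCbD : (Cb false + Cb true) * ‖dev X‖ ≤
      (14 + (8 + 12 * A + 4 * Bv) * A + (8 + 12 * Bv + 4 * A) * Bv) * ‖dev X‖ := by
    apply mul_le_mul_of_nonneg_right _ hDnn
    linarith [hCbF, hCbT]
  refine le_trans hCbD ?_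
  have h2A : 2 / (N₀ : ℝ) = 2 * A := by rw [hA_def]; ring
  have h2B : 2 / (N₁ : ℝ) = 2 * Bv := by rw [hBv_def]; ring
  rw [h2A, h2B] at hrhs1 ⊢
  set Mn := ‖μ false - μ true‖
  set Dn := ‖dev X‖
  nlinarith [hrhs1, mul_nonneg hMnn (sq_nonneg (3 - A - Bv)),
    mul_nonneg hDnn (mul_nonneg hApos.le (sub_nonneg.mpr hA1)),
    mul_nonneg hDnn (mul_nonneg hBvpos.le (sub_nonneg.mpr hBv1)),
    mul_nonneg hDnn (mul_nonneg hApos.le hBvpos.le),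
    mul_nonneg hApos.le hBvpos.le, hMnn, hDnn]
end

section
/- Let V be a finite set of N nodes partitioned into two sensitive groups S₀ and S₁ of sizes N₀ ≥ 1 and N₁ ≥ 1, with features X : V → ℝ^d and iterates F⁽ᵏ⁾ produced by the fairness-aware message passing. For each k ≥ 0, let Δᵏ ∈ ℝ^d be the componentwise maximal deviation of F⁽ᵏ⁾ from its overall mean, Δᵏ_m = max_{i∈V} |F⁽ᵏ⁾_{i,m} − (1/N)·Σ_{j∈V} F⁽ᵏ⁾_{j,m}|. Then for every k ≥ 1, ‖Δᵏ‖ ≤ (2 + 4/N₀ + 4/N₁)·‖Δᵏ⁻¹‖ + 2·‖Δ⁰‖. -/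
open Matrix Finset

section aux

lemma ker_symm' {d : ℕ} (α : ℝ) (x y : EuclideanSpace ℝ (Fin d)) : ker α x y = ker α y x := by
  simp [ker, norm_sub_rev]

lemma cross_cancel' {V : Type*} (s t : Finset V) (g : V → V → ℝ)
    (h : ∀ i j, g i j = - g j i) :
    (∑ i ∈ s, ∑ j ∈ t, g i j) + (∑ i ∈ t, ∑ j ∈ s, g i j) = 0 := by
  have h2 : ∑ i ∈ t, ∑ j ∈ s, g i j = - ∑ j ∈ s, ∑ i ∈ t, g j i := by
    rw [Finset.sum_comm, ← Finset.sum_neg_distrib]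
    refine Finset.sum_congr rfl fun j _ => ?_
    rw [← Finset.sum_neg_distrib]
    exact Finset.sum_congr rfl fun i _ => h i j
  rw [h2]; ring

lemma self_cancel' {V : Type*} (s : Finset V) (g : V → V → ℝ)
    (h : ∀ i j, g i j = - g j i) :
    (∑ i ∈ s, ∑ j ∈ s, g i j) = 0 := by
  have := cross_cancel' s s g h
  linarith

end aux

set_option maxHeartbeats 2000000 in
/-- For every `k ≥ 1`, `‖Δᵏ‖ ≤ (2 + 4/N₀ + 4/N₁)·‖Δᵏ⁻¹‖ + 2·‖Δ⁰‖`. -/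
theorem stmt9 {V : Type*} [Fintype V] {d : ℕ} {α : ℝ} (hα : 0 < α)
    (grp : V → Bool) (N₀ N₁ : ℕ)
    (hcard0 : (sgrp grp false).card = N₀) (hcard1 : (sgrp grp true).card = N₁)
    (hN₀ : 1 ≤ N₀) (hN₁ : 1 ≤ N₁)
    (Nb : V → Finset V) (hNb : ∀ i, (Nb i).Nonempty)
    (X : V → EuclideanSpace ℝ (Fin d)) (F : ℕ → V → EuclideanSpace ℝ (Fin d))
    (hF : FairMP α grp Nb X F) :
    ∀ k : ℕ, 1 ≤ k →
      ‖dev (F k)‖ ≤ (2 + 4 / (N₀ : ℝ) + 4 / (N₁ : ℝ)) * ‖dev (F (k - 1))‖ + 2 * ‖dev (F 0)‖ := by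
  obtain ⟨hF0, hFk⟩ := hF
  subst hF0
  intro k hk
  have hS0ne : (sgrp grp false).Nonempty := Finset.card_pos.mp (by rw [hcard0]; exact hN₀)
  have hVne : Nonempty V := ⟨hS0ne.choose⟩
  have hn : (0:ℝ) < (Fintype.card V : ℝ) := by
    have : 0 < Fintype.card V := Fintype.card_pos
    exact_mod_cast this
  have hN0pos : (0:ℝ) < (N₀:ℝ) := by exact_mod_cast hN₀
  have hN1pos : (0:ℝ) < (N₁:ℝ) := by exact_mod_cast hN₁
  have hcnn : (0:ℝ) ≤ 2 + 4 / (N₀:ℝ) + 4 / (N₁:ℝ) := by positivity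
  have devmem : ∀ (G : V → EuclideanSpace ℝ (Fin d)) (m : Fin d) (i : V),
      |G i m - (1 / (Fintype.card V : ℝ)) * ∑ j : V, G j m| ≤ dev G m := by
    intro G m i
    have hrw : dev G m = ⨆ i : V, |G i m - (1 / (Fintype.card V : ℝ)) * ∑ j : V, G j m| := rfl
    rw [hrw]
    exact le_ciSup (f := fun i : V => |G i m - (1 / (Fintype.card V : ℝ)) * ∑ j : V, G j m|)
      (Finite.bddAbove_range _) i
  have devnn : ∀ (G : V → EuclideanSpace ℝ (Fin d)) (m : Fin d), 0 ≤ dev G m := by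
    intro G m
    obtain ⟨i⟩ := hVne
    exact le_trans (abs_nonneg _) (devmem G m i)
  have hsplit : ∀ (g : V → ℝ), ∑ j : V, g j
      = ∑ j ∈ sgrp grp false, g j + ∑ j ∈ sgrp grp true, g j := by
    intro g
    rw [sgrp, sgrp, ← Finset.sum_filter_add_sum_filter_not Finset.univ (fun i => grp i = false) g]
    congr 1
    apply Finset.sum_congr _ (fun _ _ => rfl)
    ext j
    simp
  have key : ∀ m : Fin d, dev (F k) m
      ≤ (2 + 4 / (N₀:ℝ) + 4 / (N₁:ℝ)) * dev (F (k-1)) m + 2 * dev (F 0) m := by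
    intro m
    have hΔnn : 0 ≤ dev (F (k-1)) m := devnn _ m
    have hΔ0nn : 0 ≤ dev (F 0) m := devnn _ m
    set f : V → ℝ := fun j => F (k-1) j m with hfdef
    set μ : ℝ := (1 / (Fintype.card V : ℝ)) * ∑ j : V, f j with hμ
    have hfd : ∀ i, |f i - μ| ≤ dev (F (k-1)) m := fun i => devmem _ m i
    set x : V → ℝ := fun j => F 0 j m with hxdef
    set μx : ℝ := (1 / (Fintype.card V : ℝ)) * ∑ j : V, x j with hμx
    have hxd : ∀ i, |x i - μx| ≤ dev (F 0) m := fun i => devmem _ m i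
    set K : V → V → ℝ := fun u i => ker α (F (k-1) u) (F (k-1) i) with hK
    have hK1 : ∀ u i, K u i ≤ 1 := by
      intro u i
      apply Real.exp_le_one_iff.mpr
      have h2 : (0:ℝ) ≤ ‖F (k-1) u - F (k-1) i‖^2 := by positivity
      nlinarith
    have hK0 : ∀ u i, 0 ≤ K u i := fun u i => (Real.exp_pos _).le
    set a : V → ℝ := fun i => (((Nb i).card : ℝ)⁻¹) * ∑ u ∈ Nb i, f u with ha
    set t : V → ℝ := fun i =>
      (1 / ((sgrp grp (grp i)).card : ℝ)^2) * (∑ u ∈ sgrp grp (grp i), K u i * (f i - f u))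
      - (1 / ((N₀:ℝ) * (N₁:ℝ))) * (∑ u ∈ sgrp grp (!grp i), K u i * (f i - f u)) with ht
    have heq : ∀ i, F k i m = x i + a i + t i := by
      intro i
      have h1 := congrArg (fun v => v m) (hFk k hk i)
      have hsa : ∀ (s : Finset V) (g : V → EuclideanSpace ℝ (Fin d)),
          (∑ u ∈ s, g u) m = ∑ u ∈ s, g u m := fun s g => by simp
      simp only [PiLp.add_apply, PiLp.sub_apply, PiLp.smul_apply, hsa,
        smul_eq_mul, hcard0, hcard1] at h1
      rw [h1, hxdef, ha, ht, hK, hfdef]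
      simp only [mul_sub, sub_mul, Finset.sum_sub_distrib, Finset.sum_mul, mul_assoc]
      ring
    have gasym : ∀ j u : V, K u j * (f j - f u) = -(K j u * (f u - f j)) := by
      intro j u
      have hsym : K u j = K j u := by rw [hK]; exact ker_symm' α _ _
      rw [hsym]; ring
    have hts : ∑ j : V, t j = 0 := by
      rw [hsplit t]
      have h0 : ∑ j ∈ sgrp grp false, t j =
          (1/(N₀:ℝ)^2) * ∑ j ∈ sgrp grp false, ∑ u ∈ sgrp grp false, K u j * (f j - f u)
          - (1/((N₀:ℝ)*(N₁:ℝ))) * ∑ j ∈ sgrp grp false, ∑ u ∈ sgrp grp true, K u j * (f j - f u) := by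
        rw [Finset.mul_sum, Finset.mul_sum, ← Finset.sum_sub_distrib]
        refine Finset.sum_congr rfl fun j hj => ?_
        have hgj : grp j = false := by
          have := Finset.mem_filter.mp hj
          exact this.2
        rw [ht]
        simp only [hgj, Bool.not_false, hcard0]
      have h1 : ∑ j ∈ sgrp grp true, t j =
          (1/(N₁:ℝ)^2) * ∑ j ∈ sgrp grp true, ∑ u ∈ sgrp grp true, K u j * (f j - f u)
          - (1/((N₀:ℝ)*(N₁:ℝ))) * ∑ j ∈ sgrp grp true, ∑ u ∈ sgrp grp false, K u j * (f j - f u) := by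
        rw [Finset.mul_sum, Finset.mul_sum, ← Finset.sum_sub_distrib]
        refine Finset.sum_congr rfl fun j hj => ?_
        have hgj : grp j = true := by
          have := Finset.mem_filter.mp hj
          exact this.2
        rw [ht]
        simp only [hgj, Bool.not_true, hcard1]
      rw [h0, h1]
      have D0 : ∑ j ∈ sgrp grp false, ∑ u ∈ sgrp grp false, K u j * (f j - f u) = 0 :=
        self_cancel' _ _ gasym
      have D1 : ∑ j ∈ sgrp grp true, ∑ u ∈ sgrp grp true, K u j * (f j - f u) = 0 :=
        self_cancel' _ _ gasym
      have C : (∑ j ∈ sgrp grp false, ∑ u ∈ sgrp grp true, K u j * (f j - f u))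
          + (∑ j ∈ sgrp grp true, ∑ u ∈ sgrp grp false, K u j * (f j - f u)) = 0 :=
        cross_cancel' _ _ _ gasym
      linear_combination (1/(N₀:ℝ)^2) * D0 + (1/(N₁:ℝ)^2) * D1 - (1/((N₀:ℝ)*(N₁:ℝ))) * C
    have hsum : ∑ j : V, F k j m = ∑ j : V, x j + ∑ j : V, a j := by
      rw [Finset.sum_congr rfl (fun j _ => heq j), Finset.sum_add_distrib,
        Finset.sum_add_distrib, hts, add_zero]
    have hA : ∀ i, |a i - μ| ≤ dev (F (k-1)) m := by
      intro i
      have hcard : (0:ℝ) < ((Nb i).card : ℝ) := by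
        have := (hNb i).card_pos
        exact_mod_cast this
      have h1 : a i - μ = (((Nb i).card : ℝ)⁻¹) * ∑ u ∈ Nb i, (f u - μ) := by
        rw [ha]
        simp only [Finset.sum_sub_distrib, Finset.sum_const, nsmul_eq_mul]
        rw [mul_sub, ← mul_assoc, inv_mul_cancel₀ hcard.ne', one_mul]
      rw [h1, abs_mul, abs_inv, Nat.abs_cast]
      have h2 : |∑ u ∈ Nb i, (f u - μ)| ≤ ((Nb i).card : ℝ) * dev (F (k-1)) m := by
        calc |∑ u ∈ Nb i, (f u - μ)| ≤ ∑ u ∈ Nb i, |f u - μ| := Finset.abs_sum_le_sum_abs _ _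
          _ ≤ ∑ u ∈ Nb i, dev (F (k-1)) m := Finset.sum_le_sum fun u _ => hfd u
          _ = ((Nb i).card : ℝ) * dev (F (k-1)) m := by rw [Finset.sum_const, nsmul_eq_mul]
      calc (((Nb i).card:ℝ))⁻¹ * |∑ u ∈ Nb i, (f u - μ)|
          ≤ (((Nb i).card:ℝ))⁻¹ * (((Nb i).card:ℝ) * dev (F (k-1)) m) := by
            exact mul_le_mul_of_nonneg_left h2 (inv_nonneg.mpr hcard.le)
        _ = dev (F (k-1)) m := by rw [← mul_assoc, inv_mul_cancel₀ hcard.ne', one_mul]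
    have hMA : |(1 / (Fintype.card V : ℝ)) * ∑ j : V, a j - μ| ≤ dev (F (k-1)) m := by
      have h1 : (1 / (Fintype.card V : ℝ)) * ∑ j : V, a j - μ
          = (1 / (Fintype.card V : ℝ)) * ∑ j : V, (a j - μ) := by
        simp only [Finset.sum_sub_distrib, Finset.sum_const, Finset.card_univ, nsmul_eq_mul]
        field_simp
      rw [h1, abs_mul, abs_of_nonneg (by positivity : (0:ℝ) ≤ 1 / (Fintype.card V : ℝ))]
      have h2 : |∑ j : V, (a j - μ)| ≤ (Fintype.card V : ℝ) * dev (F (k-1)) m := by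
        calc |∑ j : V, (a j - μ)| ≤ ∑ j : V, |a j - μ| := Finset.abs_sum_le_sum_abs _ _
          _ ≤ ∑ _j : V, dev (F (k-1)) m := Finset.sum_le_sum fun u _ => hA u
          _ = (Fintype.card V : ℝ) * dev (F (k-1)) m := by
              rw [Finset.sum_const, Finset.card_univ, nsmul_eq_mul]
      calc (1 / (Fintype.card V : ℝ)) * |∑ j : V, (a j - μ)|
          ≤ (1 / (Fintype.card V : ℝ)) * ((Fintype.card V : ℝ) * dev (F (k-1)) m) := by
            exact mul_le_mul_of_nonneg_left h2 (by positivity)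
        _ = dev (F (k-1)) m := by field_simp
    have hT : ∀ i, |t i| ≤ (4/(N₀:ℝ) + 4/(N₁:ℝ)) * dev (F (k-1)) m := by
      intro i
      have hdiff : ∀ u, |K u i * (f i - f u)| ≤ 2 * dev (F (k-1)) m := by
        intro u
        rw [abs_mul]
        have h1 : |f i - f u| ≤ 2 * dev (F (k-1)) m := by
          calc |f i - f u| = |(f i - μ) - (f u - μ)| := by ring_nf
            _ ≤ |f i - μ| + |f u - μ| := abs_sub _ _
            _ ≤ 2 * dev (F (k-1)) m := by linarith [hfd i, hfd u]
        have h2 : |K u i| ≤ 1 := by rw [abs_of_nonneg (hK0 u i)]; exact hK1 u i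
        nlinarith [abs_nonneg (f i - f u), abs_nonneg (K u i)]
      have hb : ∀ (s : Finset V), |∑ u ∈ s, K u i * (f i - f u)|
          ≤ (s.card : ℝ) * (2 * dev (F (k-1)) m) := by
        intro s
        calc |∑ u ∈ s, K u i * (f i - f u)| ≤ ∑ u ∈ s, |K u i * (f i - f u)| :=
              Finset.abs_sum_le_sum_abs _ _
          _ ≤ ∑ _u ∈ s, 2 * dev (F (k-1)) m := Finset.sum_le_sum fun u _ => hdiff u
          _ = (s.card : ℝ) * (2 * dev (F (k-1)) m) := by rw [Finset.sum_const, nsmul_eq_mul]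
      have hb1 := hb (sgrp grp false)
      have hb2 := hb (sgrp grp true)
      rw [hcard0] at hb1
      rw [hcard1] at hb2
      rw [ht]
      cases hgi : grp i with
      | false =>
        simp only [hgi, Bool.not_false, hcard0]
        calc |(1/(N₀:ℝ)^2) * (∑ u ∈ sgrp grp false, K u i * (f i - f u))
              - (1/((N₀:ℝ)*(N₁:ℝ))) * (∑ u ∈ sgrp grp true, K u i * (f i - f u))|
            ≤ |(1/(N₀:ℝ)^2) * (∑ u ∈ sgrp grp false, K u i * (f i - f u))|
              + |(1/((N₀:ℝ)*(N₁:ℝ))) * (∑ u ∈ sgrp grp true, K u i * (f i - f u))| := abs_sub _ _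
          _ = (1/(N₀:ℝ)^2) * |∑ u ∈ sgrp grp false, K u i * (f i - f u)|
              + (1/((N₀:ℝ)*(N₁:ℝ))) * |∑ u ∈ sgrp grp true, K u i * (f i - f u)| := by
              rw [abs_mul, abs_mul, abs_of_nonneg (by positivity : (0:ℝ) ≤ 1/(N₀:ℝ)^2),
                abs_of_nonneg (by positivity : (0:ℝ) ≤ 1/((N₀:ℝ)*(N₁:ℝ)))]
          _ ≤ (1/(N₀:ℝ)^2) * ((N₀:ℝ) * (2 * dev (F (k-1)) m))
              + (1/((N₀:ℝ)*(N₁:ℝ))) * ((N₁:ℝ) * (2 * dev (F (k-1)) m)) := by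
              gcongr
          _ ≤ (4/(N₀:ℝ) + 4/(N₁:ℝ)) * dev (F (k-1)) m := by
              have h4 : (1/(N₀:ℝ)^2) * ((N₀:ℝ) * (2 * dev (F (k-1)) m))
                  + (1/((N₀:ℝ)*(N₁:ℝ))) * ((N₁:ℝ) * (2 * dev (F (k-1)) m))
                  = 4/(N₀:ℝ) * dev (F (k-1)) m := by field_simp; ring
              rw [h4]
              have h5 : (0:ℝ) ≤ 4/(N₁:ℝ) * dev (F (k-1)) m := by positivity
              nlinarith
      | true =>
        simp only [hgi, Bool.not_true, hcard1]
        calc |(1/(N₁:ℝ)^2) * (∑ u ∈ sgrp grp true, K u i * (f i - f u))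
              - (1/((N₀:ℝ)*(N₁:ℝ))) * (∑ u ∈ sgrp grp false, K u i * (f i - f u))|
            ≤ |(1/(N₁:ℝ)^2) * (∑ u ∈ sgrp grp true, K u i * (f i - f u))|
              + |(1/((N₀:ℝ)*(N₁:ℝ))) * (∑ u ∈ sgrp grp false, K u i * (f i - f u))| := abs_sub _ _
          _ = (1/(N₁:ℝ)^2) * |∑ u ∈ sgrp grp true, K u i * (f i - f u)|
              + (1/((N₀:ℝ)*(N₁:ℝ))) * |∑ u ∈ sgrp grp false, K u i * (f i - f u)| := by
              rw [abs_mul, abs_mul, abs_of_nonneg (by positivity : (0:ℝ) ≤ 1/(N₁:ℝ)^2),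
                abs_of_nonneg (by positivity : (0:ℝ) ≤ 1/((N₀:ℝ)*(N₁:ℝ)))]
          _ ≤ (1/(N₁:ℝ)^2) * ((N₁:ℝ) * (2 * dev (F (k-1)) m))
              + (1/((N₀:ℝ)*(N₁:ℝ))) * ((N₀:ℝ) * (2 * dev (F (k-1)) m)) := by
              gcongr
          _ ≤ (4/(N₀:ℝ) + 4/(N₁:ℝ)) * dev (F (k-1)) m := by
              have h4 : (1/(N₁:ℝ)^2) * ((N₁:ℝ) * (2 * dev (F (k-1)) m))
                  + (1/((N₀:ℝ)*(N₁:ℝ))) * ((N₀:ℝ) * (2 * dev (F (k-1)) m))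
                  = 4/(N₁:ℝ) * dev (F (k-1)) m := by field_simp; ring
              rw [h4]
              have h5 : (0:ℝ) ≤ 4/(N₀:ℝ) * dev (F (k-1)) m := by positivity
              nlinarith
    have hrw : dev (F k) m = ⨆ i : V, |F k i m - (1 / (Fintype.card V : ℝ)) * ∑ j : V, F k j m| := rfl
    rw [hrw]
    apply ciSup_le
    intro i
    have hdecomp : F k i m - (1 / (Fintype.card V : ℝ)) * ∑ j : V, F k j m
        = (x i - μx) + (a i - (1 / (Fintype.card V : ℝ)) * ∑ j : V, a j) + t i := by
      rw [heq i, hsum, hμx, mul_add]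
      ring
    rw [hdecomp]
    calc |(x i - μx) + (a i - (1 / (Fintype.card V : ℝ)) * ∑ j : V, a j) + t i|
        ≤ |x i - μx| + |a i - (1 / (Fintype.card V : ℝ)) * ∑ j : V, a j| + |t i| :=
          (abs_add_le _ _).trans (by gcongr; exact abs_add_le _ _)
      _ ≤ dev (F 0) m + (dev (F (k-1)) m + dev (F (k-1)) m)
            + (4/(N₀:ℝ) + 4/(N₁:ℝ)) * dev (F (k-1)) m := by
          have h6 : |a i - (1 / (Fintype.card V : ℝ)) * ∑ j : V, a j|
              ≤ dev (F (k-1)) m + dev (F (k-1)) m := by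
            calc |a i - (1 / (Fintype.card V : ℝ)) * ∑ j : V, a j|
                = |(a i - μ) - ((1 / (Fintype.card V : ℝ)) * ∑ j : V, a j - μ)| := by ring_nf
              _ ≤ |a i - μ| + |(1 / (Fintype.card V : ℝ)) * ∑ j : V, a j - μ| := abs_sub _ _
              _ ≤ dev (F (k-1)) m + dev (F (k-1)) m := add_le_add (hA i) hMA
          have := hxd i
          have := hT i
          linarith
      _ ≤ (2 + 4 / (N₀:ℝ) + 4 / (N₁:ℝ)) * dev (F (k-1)) m + 2 * dev (F 0) m := by
          nlinarith [hΔ0nn]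
  -- from componentwise bound to norms
  have hnorm_mono : ∀ (aa bb : EuclideanSpace ℝ (Fin d)), (∀ m, |aa m| ≤ |bb m|) → ‖aa‖ ≤ ‖bb‖ := by
    intro aa bb h
    rw [EuclideanSpace.norm_eq, EuclideanSpace.norm_eq]
    apply Real.sqrt_le_sqrt
    apply Finset.sum_le_sum
    intro m _
    simp only [Real.norm_eq_abs]
    exact pow_le_pow_left₀ (abs_nonneg _) (h m) 2
  set w : EuclideanSpace ℝ (Fin d) :=
    (2 + 4 / (N₀:ℝ) + 4 / (N₁:ℝ)) • dev (F (k-1)) + (2:ℝ) • dev (F 0) with hw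
  have hwm : ∀ m, w m = (2 + 4 / (N₀:ℝ) + 4 / (N₁:ℝ)) * dev (F (k-1)) m + 2 * dev (F 0) m := by
    intro m
    rw [hw]
    simp [PiLp.add_apply, PiLp.smul_apply, smul_eq_mul]
  have hcomp : ∀ m, |dev (F k) m| ≤ |w m| := by
    intro m
    have h1 : 0 ≤ dev (F k) m := devnn _ m
    have h2 := key m
    have h3 : 0 ≤ w m := by
      rw [hwm m]
      have := devnn (F (k-1)) m
      have := devnn (F 0) m
      positivity
    rw [abs_of_nonneg h1, abs_of_nonneg h3, hwm m]
    exact h2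
  calc ‖dev (F k)‖ ≤ ‖w‖ := hnorm_mono _ _ hcomp
    _ ≤ ‖(2 + 4 / (N₀:ℝ) + 4 / (N₁:ℝ)) • dev (F (k-1))‖ + ‖(2:ℝ) • dev (F 0)‖ := by
        rw [hw]; exact norm_add_le _ _
    _ = (2 + 4 / (N₀ : ℝ) + 4 / (N₁ : ℝ)) * ‖dev (F (k - 1))‖ + 2 * ‖dev (F 0)‖ := by
        rw [norm_smul, norm_smul, Real.norm_eq_abs, Real.norm_eq_abs,
          abs_of_nonneg hcnn, abs_of_nonneg (by norm_num : (0:ℝ) ≤ 2)]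
end

section
/- Let V be a finite set of N nodes partitioned into two sensitive groups S₀ and S₁ of sizes N₀ ≥ 1 and N₁ ≥ 1, with features X : V → ℝ^d and iterates F⁽ᵏ⁾ produced by the fairness-aware message passing, and let Δᵏ ∈ ℝ^d be the componentwise maximal deviation of F⁽ᵏ⁾ from its overall mean. Then ‖Δ²‖ ≤ ((2 + 4/N₀ + 4/N₁)² + 6 + 8/N₀ + 8/N₁)·‖Δ⁰‖. -/
open Matrix Finset

/- auxiliary lemmas -/

lemma le_dev {V : Type*} [Fintype V] {d : ℕ} (G : V → EuclideanSpace ℝ (Fin d))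
    (m : Fin d) (i : V) :
    |G i m - (1 / (Fintype.card V : ℝ)) * ∑ j : V, G j m| ≤ dev G m := by
  unfold dev
  exact le_ciSup (Set.Finite.bddAbove
    (Set.finite_range (fun i => |G i m - (1 / (Fintype.card V : ℝ)) * ∑ j : V, G j m|))) i

lemma dev_le {V : Type*} [Fintype V] [Nonempty V] {d : ℕ} (G : V → EuclideanSpace ℝ (Fin d))
    (m : Fin d) {b : ℝ}
    (h : ∀ i, |G i m - (1 / (Fintype.card V : ℝ)) * ∑ j : V, G j m| ≤ b) : dev G m ≤ b := by
  unfold dev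
  exact ciSup_le h

lemma dev_nonneg {V : Type*} [Fintype V] [Nonempty V] {d : ℕ}
    (G : V → EuclideanSpace ℝ (Fin d)) (m : Fin d) : 0 ≤ dev G m :=
  le_trans (abs_nonneg _) (le_dev G m (Classical.arbitrary V))

lemma euc_sum_apply {V : Type*} {d : ℕ} (s : Finset V) (f : V → EuclideanSpace ℝ (Fin d))
    (m : Fin d) : (∑ u ∈ s, f u) m = ∑ u ∈ s, f u m :=
  by rw [WithLp.ofLp_sum]; exact Finset.sum_apply m s (fun u => (f u).ofLp)

lemma sum_sgrp {V : Type*} [Fintype V] (grp : V → Bool) (f : V → ℝ) :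
    ∑ i, f i = ∑ i ∈ sgrp grp false, f i + ∑ i ∈ sgrp grp true, f i := by
  rw [← Finset.sum_filter_add_sum_filter_not Finset.univ (fun i => grp i = false) f]
  simp [sgrp]

lemma sum_within {V : Type*} (s : Finset V) (κ : V → V → ℝ)
    (hκ : ∀ u i, κ u i = κ i u) (g : V → ℝ) :
    ∑ i ∈ s, ∑ u ∈ s, κ u i * (g i - g u) = 0 := by
  have h2 : ∑ i ∈ s, ∑ u ∈ s, κ u i * g u = ∑ i ∈ s, ∑ u ∈ s, κ u i * g i := by
    rw [Finset.sum_comm]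
    exact Finset.sum_congr rfl fun u _ => Finset.sum_congr rfl fun i _ => by rw [hκ]
  simp only [mul_sub, Finset.sum_sub_distrib]
  rw [h2, sub_self]

lemma sum_cross {V : Type*} (s t : Finset V) (κ : V → V → ℝ)
    (hκ : ∀ u i, κ u i = κ i u) (g : V → ℝ) :
    ∑ i ∈ s, ∑ u ∈ t, κ u i * (g u - g i) + ∑ i ∈ t, ∑ u ∈ s, κ u i * (g u - g i) = 0 := by
  rw [Finset.sum_comm (s := t) (t := s), ← Finset.sum_add_distrib]
  apply Finset.sum_eq_zero
  intro i _
  rw [← Finset.sum_add_distrib]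
  apply Finset.sum_eq_zero
  intro u _
  rw [hκ u i]; ring

lemma dev_step {V : Type*} [Fintype V] {d : ℕ} {α : ℝ} (hα : 0 < α)
    (grp : V → Bool) (N₀ N₁ : ℕ)
    (hcard0 : (sgrp grp false).card = N₀) (hcard1 : (sgrp grp true).card = N₁)
    (hN₀ : 1 ≤ N₀) (hN₁ : 1 ≤ N₁)
    (Nb : V → Finset V) (hNb : ∀ i, (Nb i).Nonempty)
    (X : V → EuclideanSpace ℝ (Fin d)) (F : ℕ → V → EuclideanSpace ℝ (Fin d))
    (hF : FairMP α grp Nb X F) (k : ℕ) (m : Fin d) :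
    dev (F (k+1)) m ≤ dev (F 0) m + (2 + (4/(N₀:ℝ) + 4/(N₁:ℝ))) * dev (F k) m := by
  have hV : Nonempty V := by
    obtain ⟨i, -⟩ := Finset.card_pos.mp (show 0 < (sgrp grp false).card by omega)
    exact ⟨i⟩
  have hN0pos : (0:ℝ) < (N₀:ℝ) := by exact_mod_cast hN₀
  have hN1pos : (0:ℝ) < (N₁:ℝ) := by exact_mod_cast hN₁
  have hNpos : (0:ℝ) < (Fintype.card V : ℝ) := by
    exact_mod_cast Fintype.card_pos
  set g : V → ℝ := fun u => F k u m with hg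
  set κ : V → V → ℝ := fun u i => ker α (F k u) (F k i) with hκdef
  have hκsymm : ∀ u i, κ u i = κ i u := fun u i => by
    simp [hκdef, ker, norm_sub_rev]
  have hκpos : ∀ u i, 0 < κ u i := fun u i => Real.exp_pos _
  have hκle : ∀ u i, κ u i ≤ 1 := fun u i => by
    apply Real.exp_le_one_iff.mpr
    have : (0:ℝ) ≤ α * ‖F k u - F k i‖ ^ 2 := by positivity
    linarith
  set N : ℝ := (Fintype.card V : ℝ) with hN
  set μ : ℝ := (1/N) * ∑ j, g j with hμ
  set Δ : ℝ := dev (F k) m with hΔdef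
  have hΔ : ∀ u, |g u - μ| ≤ Δ := fun u => le_dev (F k) m u
  have hΔ0 : 0 ≤ Δ := dev_nonneg _ _
  have hgd : ∀ u v, |g u - g v| ≤ 2*Δ := by
    intro u v
    calc |g u - g v| = |(g u - μ) - (g v - μ)| := by ring_nf
      _ ≤ |g u - μ| + |g v - μ| := abs_sub _ _
      _ ≤ Δ + Δ := add_le_add (hΔ u) (hΔ v)
      _ = 2*Δ := by ring
  set A : V → ℝ := fun i => ((Nb i).card : ℝ)⁻¹ * ∑ u ∈ Nb i, g u with hAdef
  set B : V → ℝ := fun i =>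
      (1 / ((sgrp grp (grp i)).card : ℝ) ^ 2) *
        ∑ u ∈ sgrp grp (grp i), κ u i * (g i - g u)
      + (1 / (((sgrp grp false).card : ℝ) * ((sgrp grp true).card : ℝ))) *
        ∑ u ∈ sgrp grp (!grp i), κ u i * (g u - g i) with hBdef
  have hgfold : ∀ u, F k u m = g u := fun u => rfl
  have hκfold : ∀ u i, ker α (F k u) (F k i) = κ u i := fun _ _ => rfl
  have hdecomp : ∀ i, F (k+1) i m = X i m + A i + B i := by
    intro i
    have heq := congrArg (fun v : EuclideanSpace ℝ (Fin d) => v m) (hF.2 (k+1) (Nat.le_add_left 1 k) i)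
    simp only [Nat.add_sub_cancel] at heq
    rw [heq]
    simp only [PiLp.add_apply, PiLp.sub_apply, PiLp.smul_apply, euc_sum_apply,
      smul_eq_mul, hκfold, hgfold, hAdef, hBdef]
    simp only [mul_sub, sub_mul, Finset.sum_sub_distrib, ← Finset.sum_mul]
    ring
  -- mean of B is zero
  have hmeanB : ∑ i, B i = 0 := by
    rw [sum_sgrp grp B]
    have h0 : ∀ b : Bool, ∑ i ∈ sgrp grp b, B i =
        (1 / ((sgrp grp b).card : ℝ) ^ 2) *
          ∑ i ∈ sgrp grp b, ∑ u ∈ sgrp grp b, κ u i * (g i - g u)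
        + (1 / (((sgrp grp false).card : ℝ) * ((sgrp grp true).card : ℝ))) *
          ∑ i ∈ sgrp grp b, ∑ u ∈ sgrp grp (!b), κ u i * (g u - g i) := by
      intro b
      rw [Finset.mul_sum, Finset.mul_sum, ← Finset.sum_add_distrib]
      apply Finset.sum_congr rfl
      intro i hi
      have hgi : grp i = b := by simpa [sgrp] using hi
      rw [hBdef]
      simp only [hgi]
    rw [h0 false, h0 true, sum_within _ κ hκsymm g, sum_within _ κ hκsymm g]
    have := sum_cross (sgrp grp false) (sgrp grp true) κ hκsymm g
    simp only [Bool.not_false, Bool.not_true, mul_zero, zero_add]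
    rw [← mul_add]
    rw [this, mul_zero]
  -- bound on B
  have hB : ∀ i, |B i| ≤ (4/(N₀:ℝ) + 4/(N₁:ℝ)) * Δ := by
    intro i
    have hterm : ∀ (s : Finset V), |∑ u ∈ s, κ u i * (g i - g u)| ≤ (s.card : ℝ) * (2*Δ) := by
      intro s
      calc |∑ u ∈ s, κ u i * (g i - g u)| ≤ ∑ u ∈ s, |κ u i * (g i - g u)| :=
            Finset.abs_sum_le_sum_abs _ _
        _ ≤ ∑ u ∈ s, 2*Δ := by
            apply Finset.sum_le_sum
            intro u _
            rw [abs_mul, abs_of_pos (hκpos u i)]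
            calc κ u i * |g i - g u| ≤ 1 * (2*Δ) := by
                  apply mul_le_mul (hκle u i) (hgd i u) (abs_nonneg _) zero_le_one
              _ = 2*Δ := by ring
        _ = (s.card : ℝ) * (2*Δ) := by rw [Finset.sum_const, nsmul_eq_mul]
    have hterm' : ∀ (s : Finset V), |∑ u ∈ s, κ u i * (g u - g i)| ≤ (s.card : ℝ) * (2*Δ) := by
      intro s
      have : ∑ u ∈ s, κ u i * (g u - g i) = -∑ u ∈ s, κ u i * (g i - g u) := by
        rw [← Finset.sum_neg_distrib]
        exact Finset.sum_congr rfl fun u _ => by ring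
      rw [this, abs_neg]
      exact hterm s
    rw [hBdef]
    simp only []
    cases hgi : grp i
    · simp only [hgi, Bool.not_false, hcard0, hcard1]
      calc |1 / (N₀:ℝ)^2 * ∑ u ∈ sgrp grp false, κ u i * (g i - g u)
            + 1 / ((N₀:ℝ)*(N₁:ℝ)) * ∑ u ∈ sgrp grp true, κ u i * (g u - g i)|
          ≤ 1 / (N₀:ℝ)^2 * ((N₀:ℝ) * (2*Δ)) + 1 / ((N₀:ℝ)*(N₁:ℝ)) * ((N₁:ℝ) * (2*Δ)) := by
            apply le_trans (abs_add_le _ _)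
            apply add_le_add
            · rw [abs_mul, abs_of_pos (by positivity)]
              apply mul_le_mul_of_nonneg_left _ (by positivity)
              rw [← hcard0]
              exact hterm (sgrp grp false)
            · rw [abs_mul, abs_of_pos (by positivity)]
              apply mul_le_mul_of_nonneg_left _ (by positivity)
              rw [← hcard1]
              exact hterm' (sgrp grp true)
        _ = 4 * (Δ/(N₀:ℝ)) := by field_simp; ring
        _ ≤ (4/(N₀:ℝ) + 4/(N₁:ℝ)) * Δ := by
            have h1 : 0 ≤ Δ/(N₁:ℝ) := by positivity
            have : (4/(N₀:ℝ) + 4/(N₁:ℝ)) * Δ = 4 * (Δ/(N₀:ℝ)) + 4 * (Δ/(N₁:ℝ)) := by ring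
            linarith
    · simp only [hgi, Bool.not_true, hcard0, hcard1]
      calc |1 / (N₁:ℝ)^2 * ∑ u ∈ sgrp grp true, κ u i * (g i - g u)
            + 1 / ((N₀:ℝ)*(N₁:ℝ)) * ∑ u ∈ sgrp grp false, κ u i * (g u - g i)|
          ≤ 1 / (N₁:ℝ)^2 * ((N₁:ℝ) * (2*Δ)) + 1 / ((N₀:ℝ)*(N₁:ℝ)) * ((N₀:ℝ) * (2*Δ)) := by
            apply le_trans (abs_add_le _ _)
            apply add_le_add
            · rw [abs_mul, abs_of_pos (by positivity)]
              apply mul_le_mul_of_nonneg_left _ (by positivity)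
              rw [← hcard1]
              exact hterm (sgrp grp true)
            · rw [abs_mul, abs_of_pos (by positivity)]
              apply mul_le_mul_of_nonneg_left _ (by positivity)
              rw [← hcard0]
              exact hterm' (sgrp grp false)
        _ = 4 * (Δ/(N₁:ℝ)) := by field_simp; ring
        _ ≤ (4/(N₀:ℝ) + 4/(N₁:ℝ)) * Δ := by
            have h1 : 0 ≤ Δ/(N₀:ℝ) := by positivity
            have : (4/(N₀:ℝ) + 4/(N₁:ℝ)) * Δ = 4 * (Δ/(N₀:ℝ)) + 4 * (Δ/(N₁:ℝ)) := by ring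
            linarith
  -- bound on A
  have hA : ∀ i, |A i - μ| ≤ Δ := by
    intro i
    have hc : (0:ℝ) < ((Nb i).card : ℝ) := by exact_mod_cast Finset.card_pos.mpr (hNb i)
    have key : A i - μ = ((Nb i).card : ℝ)⁻¹ * ∑ u ∈ Nb i, (g u - μ) := by
      rw [Finset.sum_sub_distrib, Finset.sum_const, nsmul_eq_mul, mul_sub, hAdef]
      simp only []
      rw [← mul_assoc, inv_mul_cancel₀ (ne_of_gt hc), one_mul]
    rw [key, abs_mul, abs_of_pos (inv_pos.mpr hc)]
    calc ((Nb i).card : ℝ)⁻¹ * |∑ u ∈ Nb i, (g u - μ)|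
        ≤ ((Nb i).card : ℝ)⁻¹ * (((Nb i).card : ℝ) * Δ) := by
          apply mul_le_mul_of_nonneg_left _ (inv_pos.mpr hc).le
          calc |∑ u ∈ Nb i, (g u - μ)| ≤ ∑ u ∈ Nb i, |g u - μ| := Finset.abs_sum_le_sum_abs _ _
            _ ≤ ∑ u ∈ Nb i, Δ := Finset.sum_le_sum fun u _ => hΔ u
            _ = ((Nb i).card : ℝ) * Δ := by rw [Finset.sum_const, nsmul_eq_mul]
      _ = Δ := by rw [← mul_assoc, inv_mul_cancel₀ (ne_of_gt hc), one_mul]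
  -- mean of F (k+1)
  have hmean : (1/N) * ∑ j, F (k+1) j m =
      (1/N) * ∑ j, X j m + (1/N) * ∑ j, A j := by
    have : ∑ j, F (k+1) j m = ∑ j, (X j m + A j + B j) :=
      Finset.sum_congr rfl fun j _ => hdecomp j
    rw [this, Finset.sum_add_distrib, Finset.sum_add_distrib, hmeanB, add_zero, mul_add]
  -- mean of A close to μ
  have hAbar : |(1/N) * ∑ j, A j - μ| ≤ Δ := by
    have hNe : (1/N) * ∑ j, A j - μ = (1/N) * ∑ j : V, (A j - μ) := by
      rw [Finset.sum_sub_distrib, Finset.sum_const, nsmul_eq_mul, mul_sub, hN]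
      simp only [Finset.card_univ]
      field_simp
    rw [hNe, abs_mul, abs_of_pos (by positivity : (0:ℝ) < 1/N)]
    calc (1/N) * |∑ j : V, (A j - μ)| ≤ (1/N) * (N * Δ) := by
          apply mul_le_mul_of_nonneg_left _ (by positivity)
          calc |∑ j : V, (A j - μ)| ≤ ∑ j : V, |A j - μ| := Finset.abs_sum_le_sum_abs _ _
            _ ≤ ∑ j : V, Δ := Finset.sum_le_sum fun j _ => hA j
            _ = N * Δ := by rw [Finset.sum_const, nsmul_eq_mul, hN, Finset.card_univ]
      _ = Δ := by field_simp
  -- conclude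
  apply dev_le
  intro i
  have hX : |X i m - (1/N) * ∑ j, X j m| ≤ dev (F 0) m := by
    rw [show X = F 0 from hF.1.symm]
    exact le_dev (F 0) m i
  have expand : F (k+1) i m - (1 / (Fintype.card V : ℝ)) * ∑ j, F (k+1) j m =
      (X i m - (1/N) * ∑ j, X j m) + ((A i - μ) - ((1/N) * ∑ j, A j - μ)) + B i := by
    rw [hdecomp i]
    rw [show (1 / (Fintype.card V : ℝ)) * ∑ j, F (k+1) j m = (1/N) * ∑ j, F (k+1) j m from rfl]
    rw [hmean]
    ring
  rw [expand]
  calc |(X i m - (1/N) * ∑ j, X j m) + ((A i - μ) - ((1/N) * ∑ j, A j - μ)) + B i|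
      ≤ |X i m - (1/N) * ∑ j, X j m| + |(A i - μ) - ((1/N) * ∑ j, A j - μ)| + |B i| := by
        apply le_trans (abs_add_le _ _)
        exact add_le_add_left (abs_add_le _ _) _
    _ ≤ dev (F 0) m + (Δ + Δ) + (4/(N₀:ℝ) + 4/(N₁:ℝ)) * Δ := by
        apply add_le_add (add_le_add hX ?_) (hB i)
        apply le_trans (abs_sub _ _)
        exact add_le_add (hA i) hAbar
    _ = dev (F 0) m + (2 + (4/(N₀:ℝ) + 4/(N₁:ℝ))) * Δ := by ring


/-- `‖Δ²‖ ≤ ((2 + 4/N₀ + 4/N₁)² + 6 + 8/N₀ + 8/N₁)·‖Δ⁰‖`. -/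
theorem stmt10 {V : Type*} [Fintype V] {d : ℕ} {α : ℝ} (hα : 0 < α)
    (grp : V → Bool) (N₀ N₁ : ℕ)
    (hcard0 : (sgrp grp false).card = N₀) (hcard1 : (sgrp grp true).card = N₁)
    (hN₀ : 1 ≤ N₀) (hN₁ : 1 ≤ N₁)
    (Nb : V → Finset V) (hNb : ∀ i, (Nb i).Nonempty)
    (X : V → EuclideanSpace ℝ (Fin d)) (F : ℕ → V → EuclideanSpace ℝ (Fin d))
    (hF : FairMP α grp Nb X F) :
    ‖dev (F 2)‖ ≤
      ((2 + 4 / (N₀ : ℝ) + 4 / (N₁ : ℝ)) ^ 2 + 6 + 8 / (N₀ : ℝ) + 8 / (N₁ : ℝ)) * ‖dev (F 0)‖ := by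
  have hV : Nonempty V := by
    obtain ⟨i, -⟩ := Finset.card_pos.mp (show 0 < (sgrp grp false).card by omega)
    exact ⟨i⟩
  have hN0pos : (0:ℝ) < (N₀:ℝ) := by exact_mod_cast hN₀
  have hN1pos : (0:ℝ) < (N₁:ℝ) := by exact_mod_cast hN₁
  set C : ℝ := (2 + 4 / (N₀ : ℝ) + 4 / (N₁ : ℝ)) ^ 2 + 6 + 8 / (N₀ : ℝ) + 8 / (N₁ : ℝ) with hC
  have hCnonneg : 0 ≤ C := by positivity
  set c : ℝ := 4 / (N₀ : ℝ) + 4 / (N₁ : ℝ) with hc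
  have hcnn : 0 ≤ c := by positivity
  -- componentwise bound
  have hcomp : ∀ m : Fin d, dev (F 2) m ≤ C * dev (F 0) m := by
    intro m
    have h1 := dev_step hα grp N₀ N₁ hcard0 hcard1 hN₀ hN₁ Nb hNb X F hF 0 m
    have h2 := dev_step hα grp N₀ N₁ hcard0 hcard1 hN₀ hN₁ Nb hNb X F hF 1 m
    rw [← hc] at h1 h2
    have hd0 : 0 ≤ dev (F 0) m := dev_nonneg _ _
    have h1' := mul_le_mul_of_nonneg_left h1 (show (0:ℝ) ≤ 2 + c by linarith)
    have hCe : C = c^2 + 6*c + 10 := by rw [hC, hc]; ring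
    rw [hCe]
    norm_num at h2 h1' ⊢
    nlinarith [h2, h1', hd0, hcnn, mul_nonneg hcnn hd0]
  have key : ‖dev (F 2)‖ ≤ ‖C • dev (F 0)‖ := by
    rw [EuclideanSpace.norm_eq, EuclideanSpace.norm_eq]
    apply Real.sqrt_le_sqrt
    apply Finset.sum_le_sum
    intro m _
    rw [PiLp.smul_apply, smul_eq_mul, Real.norm_eq_abs, Real.norm_eq_abs]
    have h := hcomp m
    have h2 : |dev (F 2) m| = dev (F 2) m := abs_of_nonneg (dev_nonneg _ _)
    have h0 : (0:ℝ) ≤ C * dev (F 0) m := le_trans (dev_nonneg _ _) h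
    calc |dev (F 2) m| ^ 2 ≤ (C * dev (F 0) m) ^ 2 := by
          rw [h2]; exact pow_le_pow_left₀ (dev_nonneg _ _) h 2
      _ ≤ |C * dev (F 0) m| ^ 2 := by rw [sq_abs]
  calc ‖dev (F 2)‖ ≤ ‖C • dev (F 0)‖ := key
    _ = C * ‖dev (F 0)‖ := by
        rw [norm_smul, Real.norm_eq_abs, abs_of_nonneg hCnonneg]
end
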